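/- The Fischer–Burmeister function π_FB(a,b) = √(a²+b²) − a − b satisfies: π_FB(a,b) = 0 if and only if a ≥ 0, b ≥ 0, and ab = 0. Moreover, the squared function (a,b) ↦ π_FB(a,b)² is continuously differentiable on ℝ², and its gradient vanishes at every point of the set {(a,b) | a ≥ 0, b ≥ 0, ab = 0}. -/

import Mathlib

noncomputable def piFB (a b : ℝ) : ℝ := Real.sqrt (a ^ 2 + b ^ 2) - a - b

noncomputable def DFB (p : ℝ × ℝ) : ℝ × ℝ →L[ℝ] ℝ :=
  (2 * piFB p.1 p.2) •
    ((p.1 / Real.sqrt (p.1 ^ 2 + p.2 ^ 2) - 1) • ContinuousLinearMap.fst ℝ ℝ ℝ +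
     (p.2 / Real.sqrt (p.1 ^ 2 + p.2 ^ 2) - 1) • ContinuousLinearMap.snd ℝ ℝ ℝ)

lemma hDne (p : ℝ × ℝ) (hp : p ≠ 0) :
    HasFDerivAt (fun p : ℝ × ℝ => (piFB p.1 p.2) ^ 2) (DFB p) p := by
  have hq : p.1 ^ 2 + p.2 ^ 2 ≠ 0 := by
    intro h
    apply hp
    have h1 : p.1 = 0 := by nlinarith [sq_nonneg p.1, sq_nonneg p.2]
    have h2 : p.2 = 0 := by nlinarith [sq_nonneg p.1, sq_nonneg p.2]
    exact Prod.ext h1 h2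
  have hqpos : 0 < p.1 ^ 2 + p.2 ^ 2 := lt_of_le_of_ne (by positivity) (Ne.symm hq)
  have hr : 0 < Real.sqrt (p.1 ^ 2 + p.2 ^ 2) := Real.sqrt_pos.2 hqpos
  have hr2 : Real.sqrt (p.1 ^ 2 + p.2 ^ 2) ≠ 0 := ne_of_gt hr
  have hsq : Real.sqrt (p.1 ^ 2 + p.2 ^ 2) ^ 2 = p.1 ^ 2 + p.2 ^ 2 :=
    Real.sq_sqrt (le_of_lt hqpos)
  have hQ : HasFDerivAt (fun p : ℝ × ℝ => p.1 ^ 2 + p.2 ^ 2)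
      ((p.1 • ContinuousLinearMap.fst ℝ ℝ ℝ + p.1 • ContinuousLinearMap.fst ℝ ℝ ℝ) +
       (p.2 • ContinuousLinearMap.snd ℝ ℝ ℝ + p.2 • ContinuousLinearMap.snd ℝ ℝ ℝ)) p := by
    have h1 : HasFDerivAt (fun p : ℝ × ℝ => p.1 * p.1 + p.2 * p.2)
        ((p.1 • ContinuousLinearMap.fst ℝ ℝ ℝ + p.1 • ContinuousLinearMap.fst ℝ ℝ ℝ) +
         (p.2 • ContinuousLinearMap.snd ℝ ℝ ℝ + p.2 • ContinuousLinearMap.snd ℝ ℝ ℝ)) p :=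
      ((hasFDerivAt_fst.mul hasFDerivAt_fst)).add ((hasFDerivAt_snd.mul hasFDerivAt_snd))
    have : (fun p : ℝ × ℝ => p.1 ^ 2 + p.2 ^ 2) = fun p : ℝ × ℝ => p.1 * p.1 + p.2 * p.2 := by
      funext p; ring
    rw [this]; exact h1
  have hs := (Real.hasDerivAt_sqrt hq).comp_hasFDerivAt p hQ
  have hpi := (hs.sub (hasFDerivAt_fst)).sub (hasFDerivAt_snd)
  have hpi' : HasFDerivAt (fun p : ℝ × ℝ => piFB p.1 p.2) _ p := hpi
  have hf := hpi'.mul hpi'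
  have heq : (fun p : ℝ × ℝ => (piFB p.1 p.2) ^ 2)
      = fun p : ℝ × ℝ => piFB p.1 p.2 * piFB p.1 p.2 := by
    funext p; ring
  rw [heq]
  refine hf.congr_fderiv ?_
  ext
  · simp only [DFB, piFB, ContinuousLinearMap.smul_apply, ContinuousLinearMap.add_apply,
      ContinuousLinearMap.sub_apply, ContinuousLinearMap.coe_fst', ContinuousLinearMap.coe_snd',
      smul_eq_mul, ContinuousLinearMap.comp_apply, ContinuousLinearMap.inl_apply,
      ContinuousLinearMap.inr_apply]
    field_simp
    ring
  · simp only [DFB, piFB, ContinuousLinearMap.smul_apply, ContinuousLinearMap.add_apply,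
      ContinuousLinearMap.sub_apply, ContinuousLinearMap.coe_fst', ContinuousLinearMap.coe_snd',
      smul_eq_mul, ContinuousLinearMap.comp_apply, ContinuousLinearMap.inl_apply,
      ContinuousLinearMap.inr_apply]
    field_simp
    ring

lemma piFB00 : piFB 0 0 = 0 := by simp [piFB]

lemma DFB0 : DFB 0 = 0 := by
  simp [DFB, piFB]

lemma hD0 : HasFDerivAt (fun p : ℝ × ℝ => (piFB p.1 p.2) ^ 2) (DFB 0) (0 : ℝ × ℝ) := by
  rw [DFB0]
  rw [hasFDerivAt_iff_isLittleO_nhds_zero]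
  rw [Asymptotics.isLittleO_iff]
  intro c hc
  have hc16 : 0 < c / 16 := by positivity
  filter_upwards [Metric.ball_mem_nhds (0 : ℝ × ℝ) hc16] with h hh
  rw [mem_ball_zero_iff] at hh
  have h1 : |h.1| ≤ ‖h‖ := by
    calc |h.1| = ‖h.1‖ := rfl
    _ ≤ ‖h‖ := norm_fst_le h
  have h2 : |h.2| ≤ ‖h‖ := by
    calc |h.2| = ‖h.2‖ := rfl
    _ ≤ ‖h‖ := norm_snd_le h
  have hrle : Real.sqrt (h.1 ^ 2 + h.2 ^ 2) ≤ 2 * ‖h‖ := by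
    have hle : h.1 ^ 2 + h.2 ^ 2 ≤ (2 * ‖h‖) ^ 2 := by
      nlinarith [abs_nonneg h.1, abs_nonneg h.2, sq_abs h.1, sq_abs h.2, norm_nonneg h]
    calc Real.sqrt (h.1 ^ 2 + h.2 ^ 2) ≤ Real.sqrt ((2 * ‖h‖) ^ 2) := Real.sqrt_le_sqrt hle
    _ = 2 * ‖h‖ := Real.sqrt_sq (by positivity)
  have hrnn : 0 ≤ Real.sqrt (h.1 ^ 2 + h.2 ^ 2) := Real.sqrt_nonneg _
  simp only [zero_add, Prod.fst_zero, Prod.snd_zero, piFB, ContinuousLinearMap.zero_apply,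
    sub_zero]
  norm_num [Real.sqrt_zero]
  have habs1 := abs_le.mp h1
  have habs2 := abs_le.mp h2
  have hnn : (0:ℝ) ≤ ‖h‖ := norm_nonneg h
  have key : (Real.sqrt (h.1 ^ 2 + h.2 ^ 2) - h.1 - h.2) ^ 2 ≤ 16 * ‖h‖ ^ 2 := by
    nlinarith [hrle, hrnn, habs1.1, habs1.2, habs2.1, habs2.2]
  nlinarith

lemma hD (p : ℝ × ℝ) : HasFDerivAt (fun p : ℝ × ℝ => (piFB p.1 p.2) ^ 2) (DFB p) p := by
  by_cases hp : p = 0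
  · subst hp; exact hD0
  · exact hDne p hp

lemma habs_div (p : ℝ × ℝ) : |p.1 / Real.sqrt (p.1 ^ 2 + p.2 ^ 2)| ≤ 1 := by
  by_cases h : Real.sqrt (p.1 ^ 2 + p.2 ^ 2) = 0
  · have h' : p.1 ^ 2 + p.2 ^ 2 ≤ 0 := Real.sqrt_eq_zero'.mp h
    have : p.1 = 0 := by nlinarith [sq_nonneg p.1, sq_nonneg p.2]
    simp [this]
  · have hr : 0 < Real.sqrt (p.1 ^ 2 + p.2 ^ 2) :=
      lt_of_le_of_ne (Real.sqrt_nonneg _) (Ne.symm h)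
    rw [abs_div, abs_of_pos hr, div_le_one hr]
    calc |p.1| = Real.sqrt (p.1 ^ 2) := by rw [Real.sqrt_sq_eq_abs]
    _ ≤ Real.sqrt (p.1 ^ 2 + p.2 ^ 2) := Real.sqrt_le_sqrt (by nlinarith [sq_nonneg p.2])

lemma habs_div2 (p : ℝ × ℝ) : |p.2 / Real.sqrt (p.1 ^ 2 + p.2 ^ 2)| ≤ 1 := by
  by_cases h : Real.sqrt (p.1 ^ 2 + p.2 ^ 2) = 0
  · have h' : p.1 ^ 2 + p.2 ^ 2 ≤ 0 := Real.sqrt_eq_zero'.mp h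
    have : p.2 = 0 := by nlinarith [sq_nonneg p.1, sq_nonneg p.2]
    simp [this]
  · have hr : 0 < Real.sqrt (p.1 ^ 2 + p.2 ^ 2) :=
      lt_of_le_of_ne (Real.sqrt_nonneg _) (Ne.symm h)
    rw [abs_div, abs_of_pos hr, div_le_one hr]
    calc |p.2| = Real.sqrt (p.2 ^ 2) := by rw [Real.sqrt_sq_eq_abs]
    _ ≤ Real.sqrt (p.1 ^ 2 + p.2 ^ 2) := Real.sqrt_le_sqrt (by nlinarith [sq_nonneg p.1]) 

lemma contPi : Continuous (fun p : ℝ × ℝ => piFB p.1 p.2) := by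
  unfold piFB
  fun_prop

lemma normDFB_le (p : ℝ × ℝ) : ‖DFB p‖ ≤ |2 * piFB p.1 p.2| * 4 := by
  apply ContinuousLinearMap.opNorm_le_bound _ (by positivity)
  intro v
  simp only [DFB, ContinuousLinearMap.smul_apply, ContinuousLinearMap.add_apply,
    ContinuousLinearMap.coe_fst', ContinuousLinearMap.coe_snd', smul_eq_mul]
  have h1 : |v.1| ≤ ‖v‖ := norm_fst_le v
  have h2 : |v.2| ≤ ‖v‖ := norm_snd_le v
  have hc1 : |p.1 / Real.sqrt (p.1 ^ 2 + p.2 ^ 2) - 1| ≤ 2 := by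
    have := habs_div p
    have := abs_sub_abs_le_abs_sub (p.1 / Real.sqrt (p.1 ^ 2 + p.2 ^ 2)) 1
    calc |p.1 / Real.sqrt (p.1 ^ 2 + p.2 ^ 2) - 1|
        ≤ |p.1 / Real.sqrt (p.1 ^ 2 + p.2 ^ 2)| + |(1:ℝ)| := abs_sub _ _
    _ ≤ 2 := by simp; linarith [habs_div p]
  have hc2 : |p.2 / Real.sqrt (p.1 ^ 2 + p.2 ^ 2) - 1| ≤ 2 := by
    calc |p.2 / Real.sqrt (p.1 ^ 2 + p.2 ^ 2) - 1|
        ≤ |p.2 / Real.sqrt (p.1 ^ 2 + p.2 ^ 2)| + |(1:ℝ)| := abs_sub _ _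
    _ ≤ 2 := by simp; linarith [habs_div2 p]
  rw [Real.norm_eq_abs]
  calc |2 * piFB p.1 p.2 * ((p.1 / Real.sqrt (p.1 ^ 2 + p.2 ^ 2) - 1) * v.1 +
        (p.2 / Real.sqrt (p.1 ^ 2 + p.2 ^ 2) - 1) * v.2)|
      = |2 * piFB p.1 p.2| * |(p.1 / Real.sqrt (p.1 ^ 2 + p.2 ^ 2) - 1) * v.1 +
        (p.2 / Real.sqrt (p.1 ^ 2 + p.2 ^ 2) - 1) * v.2| := abs_mul _ _
  _ ≤ |2 * piFB p.1 p.2| * (4 * ‖v‖) := by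
      apply mul_le_mul_of_nonneg_left _ (abs_nonneg _)
      calc |(p.1 / Real.sqrt (p.1 ^ 2 + p.2 ^ 2) - 1) * v.1 +
            (p.2 / Real.sqrt (p.1 ^ 2 + p.2 ^ 2) - 1) * v.2|
          ≤ |(p.1 / Real.sqrt (p.1 ^ 2 + p.2 ^ 2) - 1) * v.1| +
            |(p.2 / Real.sqrt (p.1 ^ 2 + p.2 ^ 2) - 1) * v.2| := abs_add_le _ _
      _ = |p.1 / Real.sqrt (p.1 ^ 2 + p.2 ^ 2) - 1| * |v.1| +
          |p.2 / Real.sqrt (p.1 ^ 2 + p.2 ^ 2) - 1| * |v.2| := by rw [abs_mul, abs_mul]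
      _ ≤ 2 * ‖v‖ + 2 * ‖v‖ :=
          add_le_add (mul_le_mul hc1 h1 (abs_nonneg _) (by norm_num))
            (mul_le_mul hc2 h2 (abs_nonneg _) (by norm_num))
      _ = 4 * ‖v‖ := by ring
  _ = |2 * piFB p.1 p.2| * 4 * ‖v‖ := by ring

lemma contD : Continuous DFB := by
  rw [continuous_iff_continuousAt]
  intro p
  by_cases hp : p = 0
  · subst hp
    rw [ContinuousAt, DFB0]
    rw [tendsto_zero_iff_norm_tendsto_zero]
    apply squeeze_zero (fun q => norm_nonneg _) normDFB_le
    have hcont : Continuous (fun q : ℝ × ℝ => |2 * piFB q.1 q.2| * 4) := by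
      have := contPi
      fun_prop
    have h0 : |2 * piFB (0:ℝ) 0| * 4 = 0 := by rw [piFB00]; simp
    have := hcont.tendsto (0 : ℝ × ℝ)
    simpa [h0, piFB00] using this
  · have hq : p.1 ^ 2 + p.2 ^ 2 ≠ 0 := by
      intro h
      apply hp
      have h1 : p.1 = 0 := by nlinarith [sq_nonneg p.1, sq_nonneg p.2]
      have h2 : p.2 = 0 := by nlinarith [sq_nonneg p.1, sq_nonneg p.2]
      exact Prod.ext h1 h2
    have hr2 : Real.sqrt (p.1 ^ 2 + p.2 ^ 2) ≠ 0 := by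
      rw [Real.sqrt_ne_zero']
      exact lt_of_le_of_ne (by positivity) (Ne.symm hq)
    have hcr : ContinuousAt (fun q : ℝ × ℝ => Real.sqrt (q.1 ^ 2 + q.2 ^ 2)) p := by fun_prop
    have hc0 : ContinuousAt (fun q : ℝ × ℝ => 2 * piFB q.1 q.2) p :=
      (continuous_const.mul contPi).continuousAt
    have hc1 : ContinuousAt (fun q : ℝ × ℝ => q.1 / Real.sqrt (q.1 ^ 2 + q.2 ^ 2) - 1) p :=
      (continuousAt_fst.div hcr hr2).sub continuousAt_const
    have hc2 : ContinuousAt (fun q : ℝ × ℝ => q.2 / Real.sqrt (q.1 ^ 2 + q.2 ^ 2) - 1) p :=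
      (continuousAt_snd.div hcr hr2).sub continuousAt_const
    exact hc0.smul ((hc1.smul continuousAt_const).add (hc2.smul continuousAt_const))

theorem stmt_16 :
    (∀ a b : ℝ, piFB a b = 0 ↔ (0 ≤ a ∧ 0 ≤ b ∧ a * b = 0)) ∧
    ContDiff ℝ 1 (fun p : ℝ × ℝ => (piFB p.1 p.2) ^ 2) ∧
    (∀ p : ℝ × ℝ, 0 ≤ p.1 → 0 ≤ p.2 → p.1 * p.2 = 0 →
      fderiv ℝ (fun p : ℝ × ℝ => (piFB p.1 p.2) ^ 2) p = 0) := by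
  have part1 : ∀ a b : ℝ, piFB a b = 0 ↔ (0 ≤ a ∧ 0 ≤ b ∧ a * b = 0) := by
    intro a b
    unfold piFB
    constructor
    · intro h
      have hs : Real.sqrt (a ^ 2 + b ^ 2) = a + b := by linarith
      have hab : 0 ≤ a + b := hs ▸ Real.sqrt_nonneg _
      have h2 : a ^ 2 + b ^ 2 = (a + b) ^ 2 := by
        rw [← hs]; exact (Real.sq_sqrt (by positivity)).symm
      have hab0 : a * b = 0 := by nlinarith
      rcases mul_eq_zero.mp hab0 with h' | h'
      · exact ⟨le_of_eq h'.symm, by linarith, hab0⟩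
      · exact ⟨by linarith, le_of_eq h'.symm, hab0⟩
    · rintro ⟨ha, hb, hab⟩
      have h2 : a ^ 2 + b ^ 2 = (a + b) ^ 2 := by nlinarith
      rw [h2, Real.sqrt_sq (by linarith)]
      ring
  refine ⟨part1, ?_, ?_⟩
  · rw [contDiff_one_iff_fderiv]
    refine ⟨fun p => (hD p).differentiableAt, ?_⟩
    have : fderiv ℝ (fun p : ℝ × ℝ => (piFB p.1 p.2) ^ 2) = DFB :=
      funext fun p => (hD p).fderiv
    rw [this]
    exact contD
  · intro p h1 h2 h3
    have hzero : piFB p.1 p.2 = 0 := (part1 p.1 p.2).mpr ⟨h1, h2, h3⟩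
    have hmin : IsLocalMin (fun p : ℝ × ℝ => (piFB p.1 p.2) ^ 2) p := by
      apply Filter.Eventually.of_forall
      intro q
      show (piFB p.1 p.2) ^ 2 ≤ (piFB q.1 q.2) ^ 2
      rw [hzero]
      simpa using sq_nonneg (piFB q.1 q.2)
    exact hmin.fderiv_eq_zero
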